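/- Fix λ, q, μ, c̃, k > 0 with g := λ/q - μc̃/(kq) < λ/q (equivalently c̃ > 0). Then the equation c̃ = k(aq + (λ/μ)(1 - e^{-μa})) in the unknown a has the unique solution a satisfying μa = -g + L₀((λ/q)·e^g), and this a is strictly positive whenever g < λ/q. -/

import Mathlib

theorem stmt13 (lam q mu ctil k : ℝ)
    (hlam : 0 < lam) (hq : 0 < q) (hmu : 0 < mu) (hctil : 0 < ctil) (hk : 0 < k)
    (g : ℝ) (hg : g = lam / q - mu * ctil / (k * q)) (hglt : g < lam / q)
    (L0 : ℝ → ℝ)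
    (hL0 : ∀ z : ℝ, -(1 / Real.exp 1) ≤ z → -1 ≤ L0 z ∧ L0 z * Real.exp (L0 z) = z)
    (a0 : ℝ) (ha0 : a0 = (-g + L0 ((lam / q) * Real.exp g)) / mu) :
    (ctil = k * (a0 * q + (lam / mu) * (1 - Real.exp (-mu * a0)))) ∧
      (∀ a : ℝ, ctil = k * (a * q + (lam / mu) * (1 - Real.exp (-mu * a))) → a = a0) ∧
      0 < a0 := by
  have hgq : g * (k * q) = lam * k - mu * ctil := by rw [hg]; field_simp
  obtain ⟨hw1, hw2⟩ := hL0 ((lam / q) * Real.exp g) (by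
    have h1 : 0 < 1 / Real.exp 1 := by positivity
    have h2 : 0 < (lam / q) * Real.exp g := by positivity
    linarith)
  set w0 := L0 ((lam / q) * Real.exp g) with hw0def
  have hw0pos : 0 < w0 := by
    nlinarith [Real.exp_pos w0, Real.exp_pos g, mul_pos (div_pos hlam hq) (Real.exp_pos g)]
  have hw2q : w0 * Real.exp w0 * q = lam * Real.exp g := by rw [hw2]; field_simp
  have mono : ∀ x y : ℝ, 0 < x → x < y → x * Real.exp x < y * Real.exp y := by
    intro x y hx hxy
    have := Real.exp_lt_exp.mpr hxy
    nlinarith [Real.exp_pos x, Real.exp_pos y]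
  have hma0 : mu * a0 = w0 - g := by rw [ha0]; field_simp; ring
  have hew0 : Real.exp w0 = Real.exp (mu * a0) * Real.exp g := by
    rw [← Real.exp_add]; congr 1; linarith
  have hE0inv : Real.exp (-(mu * a0)) * Real.exp (mu * a0) = 1 := by
    rw [← Real.exp_add]; simp
  have hw0q : w0 * q = lam * Real.exp (-(mu * a0)) := by
    have := mul_right_cancel₀ (Real.exp_pos g).ne'
      (show (w0 * q) * Real.exp g = (lam * Real.exp (-(mu * a0))) * Real.exp g from by
        linear_combination Real.exp (-(mu * a0)) * hw2q
          - (w0 * q * Real.exp (-(mu * a0))) * hew0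
          - (w0 * q * Real.exp g) * hE0inv)
    exact this
  have hfin : mu * ctil = k * (mu * a0 * q + lam * (1 - Real.exp (-(mu * a0)))) := by
    linear_combination hgq - k * hw0q - k * q * hma0
  have heq0 : ctil = k * (a0 * q + (lam / mu) * (1 - Real.exp (-mu * a0))) := by
    have hrw : -mu * a0 = -(mu * a0) := by ring
    rw [hrw]
    field_simp
    linear_combination hfin - (k * lam) * congrArg Real.exp (show -(mu * a0) = -(a0 * mu) by ring)
  refine ⟨heq0, ?_, ?_⟩
  · intro a ha
    have hrw : -mu * a = -(mu * a) := by ring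
    rw [hrw] at ha
    have ha' : mu * ctil = k * (mu * a * q + lam * (1 - Real.exp (-(mu * a)))) := by
      rw [ha]; field_simp
    have hka : k * ((mu * a + g) * q) = k * (lam * Real.exp (-(mu * a))) := by
      linear_combination hgq - ha'
    have hq2 : (mu * a + g) * q = lam * Real.exp (-(mu * a)) :=
      mul_left_cancel₀ hk.ne' hka
    have hwpos : 0 < mu * a + g := by
      have h1 : 0 < lam * Real.exp (-(mu * a)) := by positivity
      nlinarith
    have hewa : Real.exp (mu * a + g) = Real.exp (mu * a) * Real.exp g := by
      rw [← Real.exp_add]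
    have hEainv : Real.exp (-(mu * a)) * Real.exp (mu * a) = 1 := by
      rw [← Real.exp_add]; simp
    have hwe_q : (mu * a + g) * Real.exp (mu * a + g) * q = lam * Real.exp g := by
      linear_combination (Real.exp (mu * a) * Real.exp g) * hq2
        + ((mu * a + g) * q) * hewa + (lam * Real.exp g) * hEainv
    have hww0 : mu * a + g = w0 := by
      rcases lt_trichotomy (mu * a + g) w0 with h | h | h
      · exfalso
        have h2 := mul_lt_mul_of_pos_right (mono (mu * a + g) w0 hwpos h) hq
        rw [hwe_q, hw2q] at h2
        exact lt_irrefl _ h2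
      · exact h
      · exfalso
        have h2 := mul_lt_mul_of_pos_right (mono w0 (mu * a + g) hw0pos h) hq
        rw [hw2q, hwe_q] at h2
        exact lt_irrefl _ h2
    have : mu * a = mu * a0 := by rw [hma0]; linarith
    exact mul_left_cancel₀ hmu.ne' this
  · have hgl : g * q < lam := by
      have h := mul_lt_mul_of_pos_right hglt hq
      rwa [div_mul_cancel₀ lam hq.ne'] at h
    have hw0g : g < w0 := by
      by_contra h
      push_neg at h
      rcases eq_or_lt_of_le h with h' | h'
      · rw [← h'] at hw2q hglt
        have hcan : w0 * q = lam := mul_right_cancel₀ (Real.exp_pos w0).ne'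
          (by linear_combination hw2q)
        have : w0 = lam / q := by field_simp; linarith
        linarith
      · have := mono w0 g hw0pos h'
        nlinarith [Real.exp_pos g]
    have h : 0 < mu * a0 := by rw [hma0]; linarith
    nlinarith [h]
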